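/- Let x be a non-periodic linearly recurrent sequence with constant K. Then the word complexity of x satisfies p_x(n) ≤ (K+1)·n for all n ≥ 1. -/
import Mathlib


/-- The factor of the sequence `x` starting at position `i` of length `n`. -/
def seqWord {A : Type*} (x : ℕ → A) (i n : ℕ) : List A :=
  (List.range n).map (fun k => x (i + k))

/-- The word `u` occurs in the sequence `x` at position `i`. -/
def occursAt {A : Type*} (x : ℕ → A) (u : List A) (i : ℕ) : Prop :=
  seqWord x i u.length = u

/-- `u` is a factor of the sequence `x`. -/
def IsFactor {A : Type*} (x : ℕ → A) (u : List A) : Prop :=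
  ∃ i, occursAt x u i

/-- `u` is a prefix of the sequence `x`. -/
def IsPrefixSeq {A : Type*} (u : List A) (x : ℕ → A) : Prop :=
  occursAt x u 0

/-- `x` is uniformly recurrent: every factor occurs in every sufficiently long window. -/
def UnifRec {A : Type*} (x : ℕ → A) : Prop :=
  ∀ u : List A, IsFactor x u → ∃ C, ∀ i, ∃ j, i ≤ j ∧ j < i + C ∧ occursAt x u j

/-- `w` is a return word to `u` in `x`: the factor between two consecutive occurrences of `u`. -/
def IsReturnWord {A : Type*} (x : ℕ → A) (u w : List A) : Prop :=
  ∃ i j, i < j ∧ occursAt x u i ∧ occursAt x u j ∧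
    (∀ k, i < k → k < j → ¬ occursAt x u k) ∧ w = seqWord x i (j - i)

/-- Apply a morphism (given on letters) to a word, by concatenation. -/
def morphApply {I A : Type*} (θ : I → List A) (l : List I) : List A :=
  (l.map θ).flatten

/-- Iterate an endomorphism `σ` of the free monoid `n` times on a word. -/
def morphIter {A : Type*} (σ : A → List A) : ℕ → List A → List A
  | 0, l => l
  | n + 1, l => morphApply σ (morphIter σ n l)

/-- `x` is ultimately periodic. -/
def UltPeriodic {A : Type*} (x : ℕ → A) : Prop :=
  ∃ p > 0, ∃ N, ∀ n ≥ N, x (n + p) = x n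

/-- `x` is linearly recurrent with constant `K`: it is uniformly recurrent and two
successive occurrences of any nonempty factor `u` differ by at most `K * |u|`. -/
def LinRec {A : Type*} (K : ℕ) (x : ℕ → A) : Prop :=
  UnifRec x ∧ ∀ u : List A, u ≠ [] → IsFactor x u →
    ∀ i, occursAt x u i → ∃ j, i < j ∧ j ≤ i + K * u.length ∧ occursAt x u j

/-- `σ` is prolongable on the letter `a`. -/
def Prolongable {A : Type*} (σ : A → List A) (a : A) : Prop :=
  (∃ t, σ a = a :: t ∧ t ≠ []) ∧
    Filter.Tendsto (fun n => (morphIter σ n [a]).length) Filter.atTop Filter.atTop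

/-- `σ` is growing: the image of each letter has length tending to infinity. -/
def Growing {A : Type*} (σ : A → List A) : Prop :=
  ∀ a, Filter.Tendsto (fun n => (morphIter σ n [a]).length) Filter.atTop Filter.atTop

/-- `σ` is primitive: some power sends every letter to a word containing every letter. -/
def Primitive {A : Type*} (σ : A → List A) : Prop :=
  ∃ n > 0, ∀ a b : A, b ∈ morphIter σ n [a]

/-- `x` is the fixed point `σ^∞(a)` of `σ`, prolongable on `a`. -/
def IsFixedPointOf {A : Type*} (σ : A → List A) (a : A) (x : ℕ → A) : Prop :=
  x 0 = a ∧ ∀ n, IsPrefixSeq (morphIter σ n [a]) x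

/-- The word `w` belongs to the language of the endomorphism `σ`. -/
def InLang {A : Type*} (σ : A → List A) (w : List A) : Prop :=
  ∃ a n, w <:+: morphIter σ n [a]

/-- The word `u` occurs at position `i` in the word `w`. -/
def listOccursAt {A : Type*} (w u : List A) (i : ℕ) : Prop :=
  i + u.length ≤ w.length ∧ (w.drop i).take u.length = u

/-- `|σ^k|`: the maximal length of the image of a letter under `σ^k`. -/
def maxLen {A : Type*} [Fintype A] [Nonempty A] (σ : A → List A) (k : ℕ) : ℕ :=
  Finset.univ.sup' Finset.univ_nonempty (fun a => (morphIter σ k [a]).length)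

/-- `⟨σ^k⟩`: the minimal length of the image of a letter under `σ^k`. -/
def minLen {A : Type*} [Fintype A] [Nonempty A] (σ : A → List A) (k : ℕ) : ℕ :=
  Finset.univ.inf' Finset.univ_nonempty (fun a => (morphIter σ k [a]).length)

/-- `(R, θ, z)` is the derived-sequence data of `x` on the prefix `u`: `θ 0, …, θ (R-1)`
enumerate the return words to `u` in order of first appearance in `x`, `z` is the derived
sequence, i.e. the coding of the decomposition of `x` into return words to `u`,
so that `Θ_{x,u}(z) = x`. -/
def IsDerivedSeq {A : Type*} (x : ℕ → A) (u : List A) (R : ℕ)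
    (θ : ℕ → List A) (z : ℕ → ℕ) : Prop :=
  (∀ i < R, IsReturnWord x u (θ i)) ∧
  (∀ w, IsReturnWord x u w → ∃ i < R, θ i = w) ∧
  (∀ i < R, ∀ j < R, i < j →
      sInf {k | occursAt x (θ i) k} < sInf {k | occursAt x (θ j) k}) ∧
  (∀ k, z k < R) ∧
  (∀ n, IsPrefixSeq (morphApply θ (seqWord z 0 n)) x)

lemma seqWord_length' {A : Type*} (x : ℕ → A) (i n : ℕ) : (seqWord x i n).length = n := by
  simp [seqWord]

lemma seqWord_eq_iff' {A : Type*} {x : ℕ → A} {i j n : ℕ} :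
    seqWord x i n = seqWord x j n ↔ ∀ t < n, x (i + t) = x (j + t) := by
  constructor
  · intro h t ht
    have := congrArg (fun l => l[t]?) h
    simpa [seqWord, ht] using this
  · intro h
    apply List.ext_getElem (by simp [seqWord])
    intro t h1 h2
    simp only [seqWord, List.getElem_map, List.getElem_range]
    exact h t (by simpa [seqWord] using h1)

lemma synd' {A : Type*} {x : ℕ → A} {K : ℕ} (hlr : LinRec K x) {u : List A} (hu : u ≠ [])
    {i : ℕ} (hi : occursAt x u i) :
    ∀ m, i ≤ m → ∃ k, m ≤ k ∧ k ≤ m + K * u.length ∧ occursAt x u k := by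
  intro m hm
  induction m, hm using Nat.le_induction with
  | base => exact ⟨i, le_refl _, Nat.le_add_right _ _, hi⟩
  | succ m hm ih =>
    obtain ⟨k, hk1, hk2, hk3⟩ := ih
    rcases Nat.lt_or_ge k (m+1) with h | h
    · obtain ⟨j, hj1, hj2, hj3⟩ := hlr.2 u hu ⟨k, hk3⟩ k hk3
      exact ⟨j, by omega, by omega, hj3⟩
    · exact ⟨k, h, by omega, hk3⟩

lemma unbdd' {A : Type*} {x : ℕ → A} {K : ℕ} (hlr : LinRec K x) {w : List A} (hw : w ≠ [])
    {i0 : ℕ} (hi : occursAt x w i0) : ∀ m, ∃ j, m ≤ j ∧ occursAt x w j := by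
  intro m
  induction m with
  | zero => exact ⟨i0, Nat.zero_le _, hi⟩
  | succ m ih =>
    obtain ⟨j, hj, hoj⟩ := ih
    rcases Nat.lt_or_ge j (m+1) with h | h
    · obtain ⟨j', h1, _, h3⟩ := hlr.2 w hw ⟨j, hoj⟩ j hoj
      exact ⟨j', by omega, h3⟩
    · exact ⟨j, h, hoj⟩

/-- Theorem (Durand–Host–Skau): a non-periodic linearly recurrent sequence with constant
`K` has word complexity `p_x(n) ≤ (K+1)·n` for all `n ≥ 1`. -/
theorem complexity_bound {A : Type*} [Fintype A] (x : ℕ → A)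
    (K : ℕ) (hlr : LinRec K x) (hnp : ¬ UltPeriodic x) :
    ∀ n : ℕ, 1 ≤ n →
      {u : List A | u.length = n ∧ IsFactor x u}.ncard ≤ (K + 1) * n := by
  intro n hn
  have hmul : (K + 1) * n = K * n + n := by ring
  have key : ∀ u ∈ {u : List A | u.length = n ∧ IsFactor x u},
      ∃ d ≤ K * n, u = seqWord x d n := by
    rintro u ⟨hlen, i, hocc⟩
    have hune : u ≠ [] := by
      intro h; rw [h] at hlen; simp at hlen; omega
    set w := seqWord x 0 ((K+1)*n) with hwdef
    have hwlen : w.length = (K+1)*n := seqWord_length' x 0 _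
    have hwocc : occursAt x w 0 := by
      unfold occursAt; rw [hwlen]
    have hwne : w ≠ [] := by
      intro h; rw [h] at hwlen; simp at hwlen; omega
    obtain ⟨j, hj, hwj⟩ := unbdd' hlr hwne hwocc i
    obtain ⟨k, hk1, hk2, hk3⟩ := synd' hlr hune hocc j hj
    rw [hlen] at hk2
    refine ⟨k - j, by omega, ?_⟩
    have hagree : ∀ s < (K+1)*n, x (j + s) = x (0 + s) := by
      have : seqWord x j ((K+1)*n) = seqWord x 0 ((K+1)*n) := by
        unfold occursAt at hwj
        rw [hwlen] at hwj
        rw [hwj]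
      exact seqWord_eq_iff'.mp this
    have hu_eq : u = seqWord x k n := by
      unfold occursAt at hk3
      rw [hlen] at hk3
      exact hk3.symm
    rw [hu_eq]
    rw [seqWord_eq_iff']
    intro t ht
    have hs : k - j + t < (K+1)*n := by omega
    have := hagree (k - j + t) hs
    rw [Nat.zero_add] at this
    have hjs : j + (k - j + t) = k + t := by omega
    rw [hjs] at this
    exact this
  have hsub : {u : List A | u.length = n ∧ IsFactor x u} ⊆
      (fun d => seqWord x d n) '' (Set.Iic (K*n)) := by
    intro u hu
    obtain ⟨d, hd, hud⟩ := key u hu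
    exact ⟨d, hd, hud.symm⟩
  calc {u : List A | u.length = n ∧ IsFactor x u}.ncard
      ≤ ((fun d => seqWord x d n) '' (Set.Iic (K*n))).ncard :=
        Set.ncard_le_ncard hsub ((Set.finite_Iic _).image _)
    _ ≤ (Set.Iic (K*n)).ncard := Set.ncard_image_le (Set.finite_Iic _)
    _ = ((Finset.Iic (K*n) : Finset ℕ) : Set ℕ).ncard := by rw [Finset.coe_Iic]
    _ = K*n + 1 := by rw [Set.ncard_coe_finset, Nat.card_Iic]
    _ ≤ (K+1)*n := by omega
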